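/- Every strongly connected semicomplete composition Q = T[H_1, ..., H_t] with at least six vertices has at least five 4-kings. -/

import Mathlib

/-- There is a directed walk (equivalently, path) of length at most `k` from `x` to `y`. -/
def KReach {V : Type*} (A : V → V → Prop) (k : ℕ) (x y : V) : Prop :=
  ∃ n : ℕ, n ≤ k ∧ ∃ f : ℕ → V, f 0 = x ∧ f n = y ∧ ∀ i < n, A (f i) (f (i + 1))

/-- `x` is a `k`-king: it reaches every vertex by a path of length at most `k`. -/
def IsKKing {V : Type*} (A : V → V → Prop) (k : ℕ) (x : V) : Prop :=
  ∀ y : V, KReach A k x y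

/-- A strict `k`-king: a `k`-king with some vertex at distance exactly `k`. -/
def IsStrictKKing {V : Type*} (A : V → V → Prop) (k : ℕ) (x : V) : Prop :=
  IsKKing A k x ∧ ∃ y : V, ¬ KReach A (k - 1) x y

/-- Strong connectivity of a digraph. -/
def Strong {V : Type*} (A : V → V → Prop) : Prop :=
  ∀ x y : V, ∃ k : ℕ, KReach A k x y

/-- Semicomplete digraph: at least one arc between any two distinct vertices. -/
def Semicomplete {V : Type*} (A : V → V → Prop) : Prop :=
  ∀ x y : V, x ≠ y → A x y ∨ A y x

/-- Tournament: exactly one arc between any two distinct vertices, no loops. -/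
def IsTournament {V : Type*} (A : V → V → Prop) : Prop :=
  Irreflexive A ∧ ∀ x y : V, x ≠ y → (A x y ↔ ¬ A y x)

/-- Out-degree of a vertex. -/
noncomputable def outDeg {V : Type*} (A : V → V → Prop) (x : V) : ℕ :=
  Set.ncard {y | A x y}

/-- There is a directed cycle of length exactly `k` through `x`. -/
def CycleThrough {V : Type*} (A : V → V → Prop) (k : ℕ) (x : V) : Prop :=
  ∃ f : ℕ → V, f 0 = x ∧ f k = x ∧ (∀ i < k, A (f i) (f (i + 1))) ∧
    ∀ i j, i < k → j < k → f i = f j → i = j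

/-- `x` belongs to a directed cycle of length at most `k`. -/
def OnShortCycle {V : Type*} (A : V → V → Prop) (k : ℕ) (x : V) : Prop :=
  ∃ n : ℕ, 2 ≤ n ∧ n ≤ k ∧ CycleThrough A n x

/-- `AQ` (on `W`) is the composition `T[H_1, …, H_t]` of digraphs over the digraph `AT`
(on index type `ι`), where the fiber of `π` over `i` is the vertex set of `H_i`
(each fiber is nonempty since `π` is surjective), the arcs of `H_i` are the arcs of
`AQ` inside the fiber over `i`, and arcs between different fibers are determined by `AT`. -/
structure IsComposition {ι W : Type*} (AT : ι → ι → Prop) (AQ : W → W → Prop)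
    (π : W → ι) : Prop where
  surj : Function.Surjective π
  cross : ∀ x y : W, π x ≠ π y → (AQ x y ↔ AT (π x) (π y))

/-- The digraph `H_i`: the induced subdigraph on the fiber of `π` over `i`. -/
def FiberArc {ι W : Type*} (AQ : W → W → Prop) (π : W → ι) (i : ι) :
    {w : W // π w = i} → {w : W // π w = i} → Prop :=
  fun a b => AQ a.1 b.1

/-- The induced subdigraph on the vertices satisfying `P`. -/
def DelArc {V : Type*} (A : V → V → Prop) (P : V → Prop) :
    {v : V // P v} → {v : V // P v} → Prop :=
  fun a b => A a.1 b.1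

/-- `{v}` is a `k`-absorbent set: every other vertex reaches `v` in at most `k` steps. -/
def SingletonAbsorbent {V : Type*} (A : V → V → Prop) (k : ℕ) (v : V) : Prop :=
  ∀ x : V, x ≠ v → KReach A k x v

/-- A quasi-kernel: an independent set `K` such that every vertex outside `K`
reaches some vertex of `K` by a path of length at most 2. -/
def QuasiKernel {V : Type*} (A : V → V → Prop) (K : Set V) : Prop :=
  (∀ x ∈ K, ∀ y ∈ K, x ≠ y → ¬ A x y) ∧ ∀ x ∉ K, ∃ y ∈ K, KReach A 2 x y

/-- A `k`-kernel: a `k`-independent and `(k-1)`-absorbent set. -/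
def KKernel {V : Type*} (A : V → V → Prop) (k : ℕ) (K : Set V) : Prop :=
  (∀ x ∈ K, ∀ y ∈ K, x ≠ y → ¬ KReach A (k - 1) x y) ∧
    ∀ x ∉ K, ∃ y ∈ K, KReach A (k - 1) x y

section AuxKings

lemma kreach_refl {V : Type*} {A : V → V → Prop} {k : ℕ} {x : V} : KReach A k x x :=
  ⟨0, Nat.zero_le _, fun _ => x, rfl, rfl, fun i hi => absurd hi (Nat.not_lt_zero i)⟩

lemma kreach_le {V : Type*} {A : V → V → Prop} {m n : ℕ} (h : m ≤ n) {x y : V}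
    (hk : KReach A m x y) : KReach A n x y := by
  obtain ⟨p, hp, f, h0, hn, ha⟩ := hk
  exact ⟨p, hp.trans h, f, h0, hn, ha⟩

lemma kreach_single {V : Type*} {A : V → V → Prop} {a b : V} (h : A a b) : KReach A 1 a b := by
  refine ⟨1, le_rfl, fun i => if i = 0 then a else b, by simp, by simp, ?_⟩
  intro i hi
  interval_cases i
  simpa using h

lemma kreach_two {V : Type*} {A : V → V → Prop} {a b c : V} (h1 : A a b) (h2 : A b c) :
    KReach A 2 a c := by
  refine ⟨2, le_rfl, fun i => if i = 0 then a else if i = 1 then b else c, by simp, by simp, ?_⟩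
  intro i hi
  interval_cases i <;> simp [h1, h2]

lemma walk_concat {V : Type*} {A : V → V → Prop} {a b : ℕ} {g h : ℕ → V}
    (hg : ∀ i < a, A (g i) (g (i + 1))) (hh : ∀ i < b, A (h i) (h (i + 1)))
    (hmid : g a = h 0) :
    ∃ f : ℕ → V, f 0 = g 0 ∧ f (a + b) = h b ∧ ∀ i < a + b, A (f i) (f (i + 1)) := by
  refine ⟨fun i => if i < a then g i else h (i - a), ?_, ?_, ?_⟩
  · by_cases h0 : 0 < a
    · simp [h0]
    · have ha : a = 0 := by omega
      subst ha
      simpa using hmid.symm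
  · have hnl : ¬ (a + b < a) := by omega
    simp only [if_neg hnl]
    congr 1
    omega
  · intro i hi
    by_cases h1 : i + 1 < a
    · have h2 : i < a := by omega
      simp only [if_pos h1, if_pos h2]
      exact hg i h2
    · by_cases h2 : i < a
      · have h3 : i + 1 = a := by omega
        simp only [if_pos h2, if_neg h1]
        have he : h (i + 1 - a) = g (i + 1) := by
          rw [h3]
          simpa using hmid.symm
        rw [he]
        exact hg i h2
      · simp only [if_neg h1, if_neg h2]
        have h4 : i + 1 - a = (i - a) + 1 := by omega
        rw [h4]
        exact hh (i - a) (by omega)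

lemma exists_king {V : Type*} [Fintype V] {A : V → V → Prop} (hirr : Irreflexive A)
    (hsemi : Semicomplete A) (S : Set V) (hne : S.Nonempty) :
    ∃ k ∈ S, ∀ y ∈ S, y = k ∨ A k y ∨ ∃ z ∈ S, A k z ∧ A z y := by
  obtain ⟨k, hk, hmax⟩ := Set.Finite.exists_maximalFor
    (fun c => ({y ∈ S | A c y}).ncard) S (Set.toFinite S) hne
  refine ⟨k, hk, ?_⟩
  intro y hy
  by_contra hcon
  have hyk : y ≠ k := fun h => hcon (Or.inl h)
  have hky : ¬ A k y := fun h => hcon (Or.inr (Or.inl h))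
  have hz : ∀ z ∈ S, A k z → ¬ A z y :=
    fun z hzS h1 h2 => hcon (Or.inr (Or.inr ⟨z, hzS, h1, h2⟩))
  have hAyk : A y k := (hsemi y k hyk).resolve_right hky
  have hsub : {c ∈ S | A k c} ⊂ {c ∈ S | A y c} := by
    constructor
    · rintro z ⟨hzS, hkz⟩
      have hzy : ¬ A z y := hz z hzS hkz
      have hzy' : z ≠ y := fun h => hky (h ▸ hkz)
      exact ⟨hzS, (hsemi z y hzy').resolve_left hzy⟩
    · intro hsup
      exact hirr k (hsup ⟨hk, hAyk⟩).2
  have hlt := Set.ncard_lt_ncard hsub (Set.toFinite _)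
  have heq := hmax (j := y) hy (le_of_lt hlt)
  simp only at heq hlt
  omega

lemma proj_rtg {ι W : Type*} {AT : ι → ι → Prop} {AQ : W → W → Prop} {π : W → ι}
    (hcomp : IsComposition AT AQ π) :
    ∀ (n : ℕ) (F : ℕ → W), (∀ i < n, AQ (F i) (F (i + 1))) →
      Relation.ReflTransGen AT (π (F 0)) (π (F n)) := by
  intro n
  induction n with
  | zero => intro F _; exact Relation.ReflTransGen.refl
  | succ m ih =>
    intro F hF
    have h1 := ih F fun i hi => hF i (by omega)
    by_cases he : π (F m) = π (F (m + 1))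
    · rwa [he] at h1
    · exact h1.tail ((hcomp.cross _ _ he).mp (hF m (by omega)))

lemma first_entry {ι : Type*} {A : ι → ι → Prop} {S : Set ι} {a b : ι}
    (h : Relation.ReflTransGen A a b) : a ∉ S → b ∈ S → ∃ c d, c ∉ S ∧ d ∈ S ∧ A c d := by
  induction h with
  | refl => exact fun ha hb => absurd hb ha
  | @tail p q hp hpq ih =>
    intro ha hq
    by_cases hpS : p ∈ S
    · exact ih ha hpS
    · exact ⟨p, q, hpS, hq, hpq⟩

lemma lift_walk {ι W : Type*} {AT : ι → ι → Prop} {AQ : W → W → Prop} {π : W → ι}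
    (hcomp : IsComposition AT AQ π) (hTirr : Irreflexive AT)
    (s : ι → W) (hs : ∀ i, π (s i) = i) {x y : W} {n : ℕ}
    (hn1 : 1 ≤ n) (hn4 : n ≤ 4) (g : ℕ → ι) (hg0 : g 0 = π x) (hgn : g n = π y)
    (harc : ∀ i < n, AT (g i) (g (i + 1))) : KReach AQ 4 x y := by
  have hn0 : n ≠ 0 := by omega
  refine ⟨n, hn4, fun i => if i = 0 then x else if i = n then y else s (g i), by simp,
    by simp [hn0], ?_⟩
  intro i hi
  have hπi : π (if i = 0 then x else if i = n then y else s (g i)) = g i := by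
    by_cases h0 : i = 0
    · simp [h0, hg0]
    · have hin : i ≠ n := by omega
      simp [h0, hin, hs]
  have hπi1 : π (if i + 1 = 0 then x else if i + 1 = n then y else s (g (i + 1))) = g (i + 1) := by
    by_cases h1 : i + 1 = n
    · simp [h1, hn0, hgn]
    · simp [h1, hs]
  have hne : g i ≠ g (i + 1) := fun h => hTirr _ (h ▸ harc i hi)
  have hπne : π (if i = 0 then x else if i = n then y else s (g i)) ≠
      π (if i + 1 = 0 then x else if i + 1 = n then y else s (g (i + 1))) := by
    rw [hπi, hπi1]; exact hne
  exact (hcomp.cross _ _ hπne).mpr (by rw [hπi, hπi1]; exact harc i hi)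

end AuxKings


def K2set {ι : Type*} (AT : ι → ι → Prop) : Set ι := {k | IsKKing AT 2 k}
def X1set {ι : Type*} (AT : ι → ι → Prop) : Set ι := {c | ∃ k ∈ K2set AT, AT c k ∨ c = k}
def Xset {ι : Type*} (AT : ι → ι → Prop) : Set ι := {c | ∃ k ∈ K2set AT, KReach AT 2 c k}

lemma mem_K2set {ι : Type*} {AT : ι → ι → Prop} {k : ι} : k ∈ K2set AT ↔ IsKKing AT 2 k := Iff.rfl
lemma mem_X1set {ι : Type*} {AT : ι → ι → Prop} {c : ι} :
    c ∈ X1set AT ↔ ∃ k ∈ K2set AT, AT c k ∨ c = k := Iff.rfl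
lemma mem_Xset {ι : Type*} {AT : ι → ι → Prop} {c : ι} :
    c ∈ Xset AT ↔ ∃ k ∈ K2set AT, KReach AT 2 c k := Iff.rfl

lemma fact2 {ι : Type*} [Fintype ι] {AT : ι → ι → Prop}
    (hTirr : Irreflexive AT) (hsemi : Semicomplete AT)
    (hNin : ∀ a : ι, ∃ p, AT p a) (a : ι) : ∃ w, AT w a ∧ IsKKing AT 2 w := by
  obtain ⟨p, hp⟩ := hNin a
  obtain ⟨w, hwS, hw⟩ := exists_king hTirr hsemi {c | AT c a} ⟨p, hp⟩
  refine ⟨w, hwS, ?_⟩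
  intro y
  by_cases hyw : y = w
  · exact hyw ▸ kreach_refl
  by_cases hya : y = a
  · exact hya ▸ kreach_le one_le_two (kreach_single hwS)
  by_cases hay : AT a y
  · exact kreach_two hwS hay
  have hyA : AT y a := (hsemi y a hya).resolve_right hay
  rcases hw y hyA with h | h | ⟨z, hzS, h1, h2⟩
  · exact absurd h hyw
  · exact kreach_le one_le_two (kreach_single h)
  · exact kreach_two h1 h2

lemma five_in_X {ι : Type*} [Fintype ι] {AT : ι → ι → Prop}
    (hTirr : Irreflexive AT) (hsemi : Semicomplete AT)
    (hNin : ∀ a : ι, ∃ p, AT p a)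
    (hconn : ∀ a b : ι, Relation.ReflTransGen AT a b)
    {v : ι} (hv : v ∉ Xset AT) : 5 ≤ (Xset AT).ncard := by
  have hK2X1 : K2set AT ⊆ X1set AT := fun k hk => ⟨k, hk, Or.inr rfl⟩
  have hX1X : X1set AT ⊆ Xset AT := by
    rintro c ⟨k, hk, hck | rfl⟩
    · exact ⟨k, hk, kreach_le one_le_two (kreach_single hck)⟩
    · exact ⟨c, hk, kreach_refl⟩
  obtain ⟨u, -, hu⟩ := exists_king hTirr hsemi Set.univ ⟨v, trivial⟩
  have hu2 : IsKKing AT 2 u := by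
    intro y
    rcases hu y trivial with rfl | h | ⟨z, -, h1, h2⟩
    · exact kreach_refl
    · exact kreach_le one_le_two (kreach_single h)
    · exact kreach_two h1 h2
  obtain ⟨w, hwu, hw2⟩ := fact2 hTirr hsemi hNin u
  have huK2 : u ∈ K2set AT := hu2
  have hwK2 : w ∈ K2set AT := hw2
  have hwu' : w ≠ u := fun h => hTirr u (h ▸ hwu)
  have hvK2 : v ∉ K2set AT := fun h => hv (hX1X (hK2X1 h))
  have hX1card : 4 ≤ (X1set AT).ncard := by
    by_contra hlt
    push_neg at hlt
    have hlt3 : (X1set AT).ncard ≤ 3 := by omega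
    have hallking : ∀ b ∈ X1set AT, b ∈ K2set AT := by
      intro b hb
      by_contra hbK
      obtain ⟨k, hkK, hbk'⟩ := hb
      have hbk : AT b k := by
        rcases hbk' with h | rfl
        · exact h
        · exact absurd hkK hbK
      have hbu : b ≠ u := fun h => hbK (h ▸ huK2)
      have hbw : b ≠ w := fun h => hbK (h ▸ hwK2)
      have hsub : ({u, w, b} : Set ι) ⊆ X1set AT := by
        rintro c hc
        simp only [Set.mem_insert_iff, Set.mem_singleton_iff] at hc
        rcases hc with rfl | rfl | rfl
        · exact hK2X1 huK2
        · exact hK2X1 hwK2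
        · exact ⟨k, hkK, Or.inl hbk⟩
      have h3 : ({u, w, b} : Set ι).ncard = 3 := by
        have h1 : u ∉ ({w, b} : Set ι) := by
          simp only [Set.mem_insert_iff, Set.mem_singleton_iff]
          push_neg
          exact ⟨Ne.symm hwu', Ne.symm hbu⟩
        have h2 : w ∉ ({b} : Set ι) := by simpa using Ne.symm hbw
        rw [Set.ncard_insert_of_notMem h1, Set.ncard_insert_of_notMem h2, Set.ncard_singleton]
      have hX1eq : X1set AT = {u, w, b} := by
        refine (Set.eq_of_subset_of_ncard_le hsub ?_ (Set.toFinite _)).symm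
        rw [h3]; exact hlt3
      obtain ⟨kw, hkwA, hkw2⟩ := fact2 hTirr hsemi hNin w
      have hkwX1 : kw ∈ X1set AT := hK2X1 hkw2
      have hAuw : AT u w := by
        rw [hX1eq] at hkwX1
        simp only [Set.mem_insert_iff, Set.mem_singleton_iff] at hkwX1
        rcases hkwX1 with rfl | rfl | rfl
        · exact hkwA
        · exact absurd hkwA (hTirr _)
        · exact absurd hkw2 hbK
      have hkX1 : k ∈ X1set AT := hK2X1 hkK
      have hkuw : k = u ∨ k = w := by
        rw [hX1eq] at hkX1
        simp only [Set.mem_insert_iff, Set.mem_singleton_iff] at hkX1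
        rcases hkX1 with rfl | rfl | rfl
        · exact Or.inl rfl
        · exact Or.inr rfl
        · exact absurd hkK hbK
      have hbking : IsKKing AT 2 b := by
        intro c
        by_cases hcb : c = b
        · exact hcb ▸ kreach_refl
        by_cases hck : c = k
        · exact hck ▸ kreach_le one_le_two (kreach_single hbk)
        by_cases hkc : AT k c
        · exact kreach_two hbk hkc
        have hckA : AT c k := (hsemi c k hck).resolve_right hkc
        have hcX1 : c ∈ X1set AT := ⟨k, hkK, Or.inl hckA⟩
        rw [hX1eq] at hcX1
        simp only [Set.mem_insert_iff, Set.mem_singleton_iff] at hcX1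
        rcases hcX1 with rfl | rfl | rfl
        · rcases hkuw with rfl | rfl
          · exact absurd rfl hck
          · exact kreach_two hbk hwu
        · rcases hkuw with rfl | rfl
          · exact kreach_two hbk hAuw
          · exact absurd rfl hck
        · exact absurd rfl hcb
      exact hbK hbking
    obtain ⟨c, d, hcS, hdS, hcd⟩ := first_entry (hconn v u) hvK2 huK2
    exact hcS (hallking c ⟨d, hdS, Or.inl hcd⟩)
  have huX : u ∈ Xset AT := hX1X (hK2X1 huK2)
  obtain ⟨c, d, hcX, hdX, hcd⟩ := first_entry (hconn v u) hv huX
  have hdX1 : d ∉ X1set AT := by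
    rintro ⟨k, hkK, hdk | rfl⟩
    · exact hcX ⟨k, hkK, kreach_two hcd hdk⟩
    · exact hcX ⟨d, hkK, kreach_le one_le_two (kreach_single hcd)⟩
  have hins : insert d (X1set AT) ⊆ Xset AT := Set.insert_subset hdX hX1X
  have hcardins : (insert d (X1set AT)).ncard = (X1set AT).ncard + 1 :=
    Set.ncard_insert_of_notMem hdX1
  have hle := Set.ncard_le_ncard hins (Set.toFinite _)
  omega

/-- Every strong semicomplete composition with at least six vertices has at least
five 4-kings. -/
theorem stmt13 {ι W : Type*} [Fintype ι] [Fintype W]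
    (AT : ι → ι → Prop) (AQ : W → W → Prop) (π : W → ι)
    (hcard : 2 ≤ Fintype.card ι)
    (hTirr : Irreflexive AT) (hQirr : Irreflexive AQ)
    (hsemi : Semicomplete AT) (hcomp : IsComposition AT AQ π)
    (hstrong : Strong AQ) (hn : 6 ≤ Fintype.card W) :
    5 ≤ {v : W | IsKKing AQ 4 v}.ncard := by
  classical
  choose s hs using hcomp.surj
  have hconn : ∀ a b : ι, Relation.ReflTransGen AT a b := by
    intro a b
    obtain ⟨k, n, hn', F, hF0, hFn, hFarc⟩ := hstrong (s a) (s b)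
    have h := proj_rtg hcomp n F hFarc
    rwa [hF0, hFn, hs, hs] at h
  have hNin : ∀ a : ι, ∃ p, AT p a := by
    intro a
    obtain ⟨i, hi⟩ := Fintype.exists_ne_of_one_lt_card (by omega) a
    obtain ⟨c, d, hcS, hdS, hcd⟩ := first_entry (S := {a}) (hconn i a) (by simpa using hi) rfl
    exact ⟨c, (Set.eq_of_mem_singleton hdS) ▸ hcd⟩
  have hXking : ∀ x : W, π x ∈ Xset AT → IsKKing AQ 4 x := by
    intro x hx y
    obtain ⟨k, hkK, hreach⟩ := hx
    by_cases hxy : y = x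
    · exact hxy ▸ kreach_refl
    by_cases hpy : π y = π x
    · obtain ⟨d, hd2, g, hg0, hgd, hgarc⟩ := hreach
      by_cases hvk : π x = k
      · obtain ⟨p, hp⟩ := hNin (π x)
        have hkp : KReach AT 2 (π x) p := by rw [hvk]; exact hkK p
        obtain ⟨e, he2, h, hh0, hhe, hharc⟩ := hkp
        have hstep : ∀ i < 1, AT ((fun j => if j = 0 then p else π x) i)
            ((fun j => if j = 0 then p else π x) (i + 1)) := by
          intro i hi
          interval_cases i
          simpa using hp
        obtain ⟨f, hf0, hfn, hfarc⟩ := walk_concat hharc hstep (by simpa using hhe)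
        refine lift_walk hcomp hTirr s hs (by omega) (by omega) f ?_ ?_ hfarc
        · rw [hf0, hh0]
        · rw [hfn]; simpa using hpy.symm
      · have hkv : KReach AT 2 k (π x) := hkK (π x)
        obtain ⟨m, hm2, h, hh0, hhm, hharc⟩ := hkv
        have hd1 : 1 ≤ d := by
          rcases Nat.eq_zero_or_pos d with rfl | h'
          · exact absurd (hg0.symm.trans hgd) hvk
          · exact h'
        obtain ⟨f, hf0, hfn, hfarc⟩ := walk_concat hgarc hharc (hgd.trans hh0.symm)
        refine lift_walk hcomp hTirr s hs (by omega) (by omega) f ?_ ?_ hfarc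
        · rw [hf0, hg0]
        · rw [hfn, hhm]; exact hpy.symm
    · have h2 : KReach AT 2 k (π y) := hkK (π y)
      obtain ⟨d, hd2, g, hg0, hgd, hgarc⟩ := hreach
      obtain ⟨m, hm2, h, hh0, hhm, hharc⟩ := h2
      have hpos : 1 ≤ d + m := by
        by_contra hz
        push_neg at hz
        have hd0 : d = 0 := by omega
        have hm0 : m = 0 := by omega
        apply hpy
        rw [← hhm, hm0, hh0, ← hgd, hd0, hg0]
      obtain ⟨f, hf0, hfn, hfarc⟩ := walk_concat hgarc hharc (hgd.trans hh0.symm)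
      refine lift_walk hcomp hTirr s hs hpos (by omega) f ?_ ?_ hfarc
      · rw [hf0, hg0]
      · rw [hfn, hhm]
  by_cases hall : ∀ i : ι, i ∈ Xset AT
  · have heq : {v : W | IsKKing AQ 4 v} = Set.univ :=
      Set.eq_univ_of_forall fun x => hXking x (hall _)
    rw [heq, Set.ncard_univ, Nat.card_eq_fintype_card]
    omega
  · push_neg at hall
    obtain ⟨v, hv⟩ := hall
    have h5 := five_in_X hTirr hsemi hNin hconn hv
    have hinj : Function.Injective s := fun i j hij => by rw [← hs i, ← hs j, hij]
    have himg : s '' Xset AT ⊆ {v : W | IsKKing AQ 4 v} := by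
      rintro _ ⟨i, hi, rfl⟩
      exact hXking _ (by rw [hs]; exact hi)
    have hcard' : (s '' Xset AT).ncard = (Xset AT).ncard :=
      Set.ncard_image_of_injective _ hinj
    have hle := Set.ncard_le_ncard himg (Set.toFinite _)
    omega
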